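/- Trimmed-mean filtering lemma: Let N be a finite set with |N| ≥ 2f+1, let A ⊆ N with |A| ≤ f (adversaries), and let R = N \ A. Given values x_j ∈ ℝ for j ∈ N, sort them and remove the f largest and f smallest, obtaining the retained set M ⊆ N. Then for every j ∈ M, x_j lies in the interval [min_{r∈R} x_r, max_{r∈R} x_r]. -/
import Mathlib


open Finset

/-- Trimmed-mean filtering: after removing the `f` largest and `f` smallest values, every
retained value lies between the smallest and largest values held by regular (non-adversarial)
indices. -/
theorem stmt11 {ι : Type*} [DecidableEq ι] (N : Finset ι) (f : ℕ)
    (hN : 2 * f + 1 ≤ N.card)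
    (A : Finset ι) (hA : A ⊆ N) (hAcard : A.card ≤ f)
    (x : ι → ℝ)
    (U J : Finset ι) (hU : U ⊆ N) (hJ : J ⊆ N)
    (hUcard : U.card = f) (hJcard : J.card = f) (hUJ : Disjoint U J)
    (hUtop : ∀ u ∈ U, ∀ j ∈ N \ U, x j ≤ x u)
    (hJbot : ∀ u ∈ J, ∀ j ∈ N \ J, x u ≤ x j) :
    ∀ j ∈ N \ (U ∪ J),
      (∃ r ∈ N \ A, x r ≤ x j) ∧ (∃ r ∈ N \ A, x j ≤ x r) := by
  intro j hj
  simp only [mem_sdiff, mem_union, not_or] at hj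
  obtain ⟨hjN, hjU, hjJ⟩ := hj
  constructor
  · by_cases hJA : J ⊆ A
    · have : J = A := Finset.eq_of_subset_of_card_le hJA (by omega)
      exact ⟨j, by simp [mem_sdiff, hjN, ← this, hjJ], le_refl _⟩
    · obtain ⟨r, hrJ, hrA⟩ := not_subset.mp hJA
      exact ⟨r, mem_sdiff.mpr ⟨hJ hrJ, hrA⟩, hJbot r hrJ j (mem_sdiff.mpr ⟨hjN, hjJ⟩)⟩
  · by_cases hUA : U ⊆ A
    · have : U = A := Finset.eq_of_subset_of_card_le hUA (by omega)
      exact ⟨j, by simp [mem_sdiff, hjN, ← this, hjU], le_refl _⟩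
    · obtain ⟨r, hrU, hrA⟩ := not_subset.mp hUA
      exact ⟨r, mem_sdiff.mpr ⟨hU hrU, hrA⟩, hUtop r hrU j (mem_sdiff.mpr ⟨hjN, hjU⟩)⟩
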